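/- arXiv:math/0702677 — 2 statements merged into one kernel-verified Lean document; each statement's English description precedes it below -/
import Mathlib

section
/- For every n ≥ 1, every x = (x₁,…,xₙ) ∈ Iⁿ and every i ∈ {1,…,n}: if |xᵢ| = 1 then the j-th coordinate of φₙ(x) is 0 for every j < i. -/
/-- The comparison map φₙ : Iⁿ → Gⁿ, defined recursively by φ₁(x₁) = x₁ and
    φₙ(t, y) = (t·√(1 − ‖φₙ₋₁(y)‖²), φₙ₋₁(y)). -/
noncomputable def phi : (n : ℕ) → EuclideanSpace ℝ (Fin n) → EuclideanSpace ℝ (Fin n)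
  | 0, x => x
  | n + 1, x =>
    WithLp.toLp 2 (Fin.cons (x 0 * Real.sqrt (1 - ‖phi n (WithLp.toLp 2 (fun i => x i.succ))‖ ^ 2))
        (phi n (WithLp.toLp 2 (fun i => x i.succ))) : Fin (n + 1) → ℝ)

/-- The n-cube Iⁿ = [−1,1]ⁿ, inside Euclidean n-space. -/
def cube (n : ℕ) : Set (EuclideanSpace ℝ (Fin n)) := {x | ∀ i, |x i| ≤ 1}

/-- The n-disk Dⁿ = {x : ‖x‖ ≤ 1}, the underlying space of the n-globe Gⁿ. -/
def disk (n : ℕ) : Set (EuclideanSpace ℝ (Fin n)) := {x | ‖x‖ ≤ 1}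

lemma norm_sq_eq_sum (m : ℕ) (v : EuclideanSpace ℝ (Fin m)) :
    ‖v‖ ^ 2 = ∑ i, (v i) ^ 2 := by
  rw [EuclideanSpace.norm_eq, Real.sq_sqrt (by positivity)]
  simp [Real.norm_eq_abs, sq_abs]

lemma phi_succ_def (n : ℕ) (x : EuclideanSpace ℝ (Fin (n + 1))) :
    phi (n + 1) x = WithLp.toLp 2 (Fin.cons (x 0 * Real.sqrt (1 - ‖phi n (WithLp.toLp 2 (fun i => x i.succ))‖ ^ 2))
        (phi n (WithLp.toLp 2 (fun i => x i.succ))) : Fin (n + 1) → ℝ) := rfl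

lemma norm_sq_phi_succ (n : ℕ) (x : EuclideanSpace ℝ (Fin (n + 1)))
    (h : ‖phi n (WithLp.toLp 2 (fun i => x i.succ))‖ ≤ 1) :
    ‖phi (n + 1) x‖ ^ 2 =
      (x 0) ^ 2 * (1 - ‖phi n (WithLp.toLp 2 (fun i => x i.succ))‖ ^ 2)
        + ‖phi n (WithLp.toLp 2 (fun i => x i.succ))‖ ^ 2 := by
  set p := phi n (WithLp.toLp 2 (fun i => x i.succ)) with hp
  have h1 : (0:ℝ) ≤ 1 - ‖p‖ ^ 2 := by nlinarith [norm_nonneg p]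
  rw [norm_sq_eq_sum, phi_succ_def, ← hp, Fin.sum_univ_succ]
  simp only [PiLp.toLp_apply, Fin.cons_zero, Fin.cons_succ]
  rw [mul_pow, Real.sq_sqrt h1, ← norm_sq_eq_sum]

lemma norm_phi_le_one (n : ℕ) (x : EuclideanSpace ℝ (Fin n)) (hx : x ∈ cube n) :
    ‖phi n x‖ ≤ 1 := by
  induction n with
  | zero =>
      have hx0 : x = 0 := Subsingleton.elim x 0
      show ‖x‖ ≤ 1
      rw [hx0]; simp
  | succ n ih =>
      have htail : WithLp.toLp 2 (fun i => x i.succ) ∈ cube n := fun i => hx i.succ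
      have hle := ih _ htail
      have hsq := norm_sq_phi_succ n x hle
      have hx0 : |x 0| ≤ 1 := hx 0
      have hx0sq : (x 0) ^ 2 ≤ 1 := by nlinarith [sq_abs (x 0), abs_nonneg (x 0)]
      have hp2 : ‖phi n (WithLp.toLp 2 (fun i => x i.succ))‖ ^ 2 ≤ 1 := by
        nlinarith [norm_nonneg (phi n (WithLp.toLp 2 (fun i => x i.succ)))]
      have h2 : ‖phi (n+1) x‖ ^ 2 ≤ 1 := by nlinarith [sq_nonneg (x 0)]
      nlinarith [norm_nonneg (phi (n+1) x)]

lemma norm_phi_eq_one (n : ℕ) (x : EuclideanSpace ℝ (Fin n)) (hx : x ∈ cube n)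
    (i : Fin n) (hi : |x i| = 1) : ‖phi n x‖ = 1 := by
  induction n with
  | zero => exact absurd i.2 (by simp)
  | succ n ih =>
      have htail : WithLp.toLp 2 (fun k => x k.succ) ∈ cube n := fun k => hx k.succ
      have hle := norm_phi_le_one n _ htail
      have hsq := norm_sq_phi_succ n x hle
      rcases Fin.eq_zero_or_eq_succ i with h0 | ⟨i', rfl⟩
      · subst h0
        have : (x 0) ^ 2 = 1 := by rw [← sq_abs, hi]; norm_num
        have : ‖phi (n+1) x‖ ^ 2 = 1 := by rw [hsq, this]; ring
        nlinarith [norm_nonneg (phi (n+1) x)]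
      · have h1 : ‖phi n (WithLp.toLp 2 (fun k => x k.succ))‖ = 1 := ih _ htail i' hi
        have : ‖phi (n+1) x‖ ^ 2 = 1 := by rw [hsq, h1]; ring
        nlinarith [norm_nonneg (phi (n+1) x)]

/-- for `n ≥ 1`, `x ∈ Iⁿ` and an index `i` with `|xᵢ| = 1`, all coordinates
of `φₙ(x)` before the `i`-th vanish. (Indices are 0-based here, 1-based in the paper.) -/
theorem phi_coord_eq_zero_of_abs_coord_eq_one (n : ℕ) (hn : 1 ≤ n)
    (x : EuclideanSpace ℝ (Fin n)) (hx : x ∈ cube n)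
    (i : Fin n) (hi : |x i| = 1) :
    ∀ j : Fin n, j < i → phi n x j = 0 := by
  induction n with
  | zero => exact absurd hn (by norm_num)
  | succ n ih =>
      intro j hj
      have htail : WithLp.toLp 2 (fun k => x k.succ) ∈ cube n := fun k => hx k.succ
      rcases Fin.eq_zero_or_eq_succ i with h0 | ⟨i', rfl⟩
      · subst h0; exact absurd hj (by simp [Fin.lt_def])
      · rcases Fin.eq_zero_or_eq_succ j with h0 | ⟨j', rfl⟩
        · subst h0
          have h1 : ‖phi n (WithLp.toLp 2 (fun k => x k.succ))‖ = 1 :=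
            norm_phi_eq_one n _ htail i' hi
          have := phi_succ_def n x
          rw [show phi (n+1) x 0 = ((phi (n+1) x : EuclideanSpace ℝ (Fin (n+1)))) 0 from rfl]
          rw [phi_succ_def]
          show x 0 * Real.sqrt (1 - ‖phi n (WithLp.toLp 2 (fun k => x k.succ))‖ ^ 2) = 0
          rw [h1]; norm_num
        · have hn' : 1 ≤ n := Nat.one_le_iff_ne_zero.mpr (by
            rintro rfl; exact absurd i'.2 (by simp))
          have hji : j' < i' := by
            exact Fin.succ_lt_succ_iff.mp hj
          have := ih hn' _ htail i' hi j' hji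
          rw [phi_succ_def]
          show (phi n (WithLp.toLp 2 (fun k => x k.succ))) j' = 0
          exact this
end

section
/- A singular cube factors through the globe exactly when it is globular: let X be a topological space, n ≥ 1, and a : Iⁿ → X a continuous map. Then there exists a continuous map g : Dⁿ → X with a = g ∘ φₙ if and only if for every i with 2 ≤ i ≤ n and all x, x' ∈ Iⁿ such that xᵢ = x'ᵢ ∈ {−1,1} and xⱼ = x'ⱼ for every j with i < j ≤ n, one has a(x) = a(x'). -/
lemma myNormSq (n : ℕ) (x : EuclideanSpace ℝ (Fin n)) : ‖x‖ ^ 2 = ∑ i, x i ^ 2 := by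
  rw [EuclideanSpace.norm_eq, Real.sq_sqrt (by positivity)]
  simp [Real.norm_eq_abs, sq_abs]

lemma normSq_cons (n : ℕ) (c : ℝ) (v : EuclideanSpace ℝ (Fin n)) :
    ‖(WithLp.toLp 2 (Fin.cons c v : Fin (n+1) → ℝ) : EuclideanSpace ℝ (Fin (n+1)))‖ ^ 2
      = c ^ 2 + ‖v‖ ^ 2 := by
  rw [myNormSq, myNormSq]
  simp [Fin.sum_univ_succ]

abbrev tl {n : ℕ} (x : EuclideanSpace ℝ (Fin (n+1))) : EuclideanSpace ℝ (Fin n) :=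
  WithLp.toLp 2 (fun i => x i.succ)

lemma phi_succ (n : ℕ) (x : EuclideanSpace ℝ (Fin (n+1))) :
    phi (n+1) x = WithLp.toLp 2 (Fin.cons (x 0 * Real.sqrt (1 - ‖phi n (tl x)‖ ^ 2))
        (phi n (tl x)) : Fin (n + 1) → ℝ) := rfl

lemma tl_mem_cube {n : ℕ} {x : EuclideanSpace ℝ (Fin (n+1))} (hx : x ∈ cube (n+1)) :
    tl x ∈ cube n := fun i => hx i.succ

lemma normSq_phi_succ (n : ℕ) (x : EuclideanSpace ℝ (Fin (n+1)))
    (h : ‖phi n (tl x)‖ ≤ 1) :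
    ‖phi (n+1) x‖ ^ 2 = (x 0) ^ 2 * (1 - ‖phi n (tl x)‖ ^ 2) + ‖phi n (tl x)‖ ^ 2 := by
  rw [phi_succ, normSq_cons, mul_pow, Real.sq_sqrt (by nlinarith [norm_nonneg (phi n (tl x))])]

lemma norm_zero_dim (x : EuclideanSpace ℝ (Fin 0)) : ‖x‖ = 0 := by
  have := myNormSq 0 x
  simp only [Finset.univ_eq_empty, Finset.sum_empty] at this
  nlinarith [norm_nonneg x]

lemma norm_phi_le {n : ℕ} : ∀ x ∈ cube n, ‖phi n x‖ ≤ 1 := by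
  induction n with
  | zero => intro x _; simp [phi, norm_zero_dim]
  | succ n ih =>
    intro x hx
    have h := ih (tl x) (tl_mem_cube hx)
    have h0 : |x 0| ≤ 1 := hx 0
    have hns := normSq_phi_succ n x h
    have hx0 : x 0 ^ 2 ≤ 1 := by nlinarith [sq_abs (x 0), abs_nonneg (x 0)]
    have hr : ‖phi n (tl x)‖ ^ 2 ≤ 1 := by nlinarith [norm_nonneg (phi n (tl x))]
    have hle : ‖phi (n+1) x‖ ^ 2 ≤ 1 := by nlinarith
    nlinarith [norm_nonneg (phi (n+1) x)]

lemma norm_phi_eq_one_iff {n : ℕ} : ∀ x ∈ cube n, (‖phi n x‖ = 1 ↔ ∃ k, |x k| = 1) := by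
  induction n with
  | zero =>
    intro x _
    constructor
    · intro h; rw [show phi 0 x = x from rfl, norm_zero_dim] at h; norm_num at h
    · rintro ⟨k, _⟩; exact absurd k.2 (by omega)
  | succ n ih =>
    intro x hx
    have htl := tl_mem_cube hx
    have h := norm_phi_le (tl x) htl
    have h0 : |x 0| ≤ 1 := hx 0
    have hns := normSq_phi_succ n x h
    constructor
    · intro h1
      rw [h1] at hns
      have : ((x 0) ^ 2 - 1) * (1 - ‖phi n (tl x)‖ ^ 2) = 0 := by nlinarith
      rcases mul_eq_zero.mp this with hc | hc
      · exact ⟨0, by nlinarith [sq_abs (x 0), abs_nonneg (x 0)]⟩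
      · have : ‖phi n (tl x)‖ = 1 := by nlinarith [norm_nonneg (phi n (tl x))]
        obtain ⟨k, hk⟩ := (ih (tl x) htl).mp this
        exact ⟨k.succ, hk⟩
    · rintro ⟨k, hk⟩
      have hsq : ‖phi (n+1) x‖ ^ 2 = 1 := by
        rcases Fin.eq_zero_or_eq_succ k with rfl | ⟨j, rfl⟩
        · have hx2 : x 0 ^ 2 = 1 := by rw [← sq_abs, hk]; norm_num
          rw [hns, hx2]; ring
        · have : ‖phi n (tl x)‖ = 1 := (ih (tl x) htl).mpr ⟨j, hk⟩
          rw [hns, this]; ring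
      rw [← Real.sqrt_sq (norm_nonneg (phi (n+1) x)), hsq, Real.sqrt_one]

lemma phi_surj {n : ℕ} : ∀ u ∈ disk n, ∃ x ∈ cube n, phi n x = u := by
  induction n with
  | zero => intro u _; exact ⟨u, fun i => absurd i.2 (by omega), rfl⟩
  | succ n ih =>
    intro u hu
    have hnu : ‖u‖ ≤ 1 := hu
    have hsum := myNormSq (n+1) u
    have htl : ‖(tl u : EuclideanSpace ℝ (Fin n))‖ ^ 2 + (u 0) ^ 2 = ‖u‖ ^ 2 := by
      rw [myNormSq, myNormSq]
      rw [Fin.sum_univ_succ]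
      ring_nf
    have htl1 : ‖(tl u : EuclideanSpace ℝ (Fin n))‖ ≤ 1 := by
      nlinarith [norm_nonneg (tl u : EuclideanSpace ℝ (Fin n)), sq_nonneg (u 0),
        norm_nonneg u]
    obtain ⟨y, hy, hyu⟩ := ih (tl u) htl1
    have hny : ‖phi n y‖ = ‖(tl u : EuclideanSpace ℝ (Fin n))‖ := by rw [hyu]
    by_cases hcase : ‖(tl u : EuclideanSpace ℝ (Fin n))‖ = 1
    · -- u 0 = 0
      have hu0 : u 0 = 0 := by nlinarith [sq_nonneg (u 0), norm_nonneg u]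
      refine ⟨WithLp.toLp 2 (Fin.cons 0 y : Fin (n+1) → ℝ), ?_, ?_⟩
      · intro i
        rcases Fin.eq_zero_or_eq_succ i with rfl | ⟨j, rfl⟩
        · simp
        · simpa using hy j
      · rw [phi_succ]
        have htleq : tl (WithLp.toLp 2 (Fin.cons 0 y : Fin (n+1) → ℝ)) = y := by
          ext i; simp [tl]
        rw [htleq, hyu]
        ext i
        rcases Fin.eq_zero_or_eq_succ i with rfl | ⟨j, rfl⟩
        · simp [hu0]
        · simp [tl]
    · have hlt : ‖(tl u : EuclideanSpace ℝ (Fin n))‖ < 1 := lt_of_le_of_ne htl1 hcase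
      set r := ‖(tl u : EuclideanSpace ℝ (Fin n))‖ with hr
      have hs : Real.sqrt (1 - r ^ 2) > 0 := Real.sqrt_pos.mpr (by nlinarith [norm_nonneg (tl u : EuclideanSpace ℝ (Fin n))])
      set t := u 0 / Real.sqrt (1 - r ^ 2) with ht
      have habs : |t| ≤ 1 := by
        rw [abs_div, abs_of_pos hs, div_le_one hs]
        have h1 : (u 0) ^ 2 ≤ 1 - r ^ 2 := by nlinarith [norm_nonneg u, sq_nonneg (1 - ‖u‖)]
        have : |u 0| = Real.sqrt ((u 0) ^ 2) := by rw [Real.sqrt_sq_eq_abs]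
        rw [this]
        exact Real.sqrt_le_sqrt h1
      refine ⟨WithLp.toLp 2 (Fin.cons t y : Fin (n+1) → ℝ), ?_, ?_⟩
      · intro i
        rcases Fin.eq_zero_or_eq_succ i with rfl | ⟨j, rfl⟩
        · simpa using habs
        · simpa using hy j
      · rw [phi_succ]
        have htleq : tl (WithLp.toLp 2 (Fin.cons t y : Fin (n+1) → ℝ)) = y := by
          ext i; simp [tl]
        rw [htleq, hyu]
        ext i
        rcases Fin.eq_zero_or_eq_succ i with rfl | ⟨j, rfl⟩
        · show t * Real.sqrt (1 - r ^ 2) = u 0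
          rw [ht, div_mul_cancel₀]
          exact ne_of_gt hs
        · simp [tl]

/-- single globular step implies equal phi -/
lemma phi_eq_of_step {n : ℕ} : ∀ x ∈ cube n, ∀ x' ∈ cube n, ∀ i : Fin n, 1 ≤ (i : ℕ) →
    x i = x' i → |x i| = 1 → (∀ j : Fin n, i < j → x j = x' j) → phi n x = phi n x' := by
  induction n with
  | zero => intro x _ x' _ i; exact absurd i.2 (by omega)
  | succ n ih =>
    intro x hx x' hx' i hi hxi habs hup
    rcases Fin.eq_zero_or_eq_succ i with rfl | ⟨i₀, rfl⟩
    · simp at hi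
    · -- tails have equal phi
      have htl : phi n (tl x) = phi n (tl x') := by
        rcases Nat.eq_zero_or_pos (i₀ : ℕ) with h0 | hpos
        · -- tails are equal
          have : tl x = tl x' := by
            ext j
            show x j.succ = x' j.succ
            rcases Nat.eq_zero_or_pos (j : ℕ) with hj | hj
            · have hje : j.succ = i₀.succ := by
                apply Fin.ext
                simp [Fin.val_succ, hj, h0]
              rw [hje]; exact hxi
            · exact hup j.succ (by rw [Fin.lt_def]; simp [Fin.val_succ, h0]; omega)
          rw [this]
        · exact ih (tl x) (tl_mem_cube hx) (tl x') (tl_mem_cube hx') i₀ hpos hxi habs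
            (fun j hj => hup j.succ (Fin.succ_lt_succ_iff.mpr hj))
      have hone : ‖phi n (tl x)‖ = 1 :=
        (norm_phi_eq_one_iff (tl x) (tl_mem_cube hx)).mpr ⟨i₀, habs⟩
      rw [phi_succ, phi_succ, htl]
      rw [htl] at hone
      rw [hone]
      norm_num

/-- fibers of phi are globular steps -/
lemma fiber_step {n : ℕ} : ∀ x ∈ cube n, ∀ x' ∈ cube n, phi n x = phi n x' →
    x = x' ∨ ∃ i : Fin n, 1 ≤ (i : ℕ) ∧ x i = x' i ∧ |x i| = 1 ∧
      ∀ j : Fin n, i < j → x j = x' j := by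
  induction n with
  | zero => intro x _ x' _ _; left; ext i; exact absurd i.2 (by omega)
  | succ n ih =>
    intro x hx x' hx' heq
    have htl : phi n (tl x) = phi n (tl x') := by
      ext i
      have := congrArg (· i.succ) heq
      rw [phi_succ, phi_succ] at this
      simpa using this
    have h0eq : x 0 * Real.sqrt (1 - ‖phi n (tl x)‖ ^ 2)
        = x' 0 * Real.sqrt (1 - ‖phi n (tl x')‖ ^ 2) := by
      have := congrArg (· 0) heq
      rw [phi_succ, phi_succ] at this
      simpa using this
    rcases ih (tl x) (tl_mem_cube hx) (tl x') (tl_mem_cube hx') htl with he | ⟨i, hi1, hie, hia, hiu⟩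
    · -- tails equal; compare head
      by_cases hs : ‖phi n (tl x)‖ = 1
      · obtain ⟨k, hk⟩ := (norm_phi_eq_one_iff (tl x) (tl_mem_cube hx)).mp hs
        right
        refine ⟨k.succ, by simp [Fin.val_succ], ?_, hk, ?_⟩
        · show x k.succ = x' k.succ
          exact congrArg (· k) he
        · intro j hj
          rcases Fin.eq_zero_or_eq_succ j with rfl | ⟨j₀, rfl⟩
          · exact absurd hj (by simp [Fin.lt_def])
          · exact congrArg (· j₀) he
      · left
        have hlt : ‖phi n (tl x)‖ < 1 :=
          lt_of_le_of_ne (norm_phi_le (tl x) (tl_mem_cube hx)) hs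
        have hspos : Real.sqrt (1 - ‖phi n (tl x)‖ ^ 2) > 0 :=
          Real.sqrt_pos.mpr (by nlinarith [norm_nonneg (phi n (tl x))])
        rw [← htl] at h0eq
        have h00 : x 0 = x' 0 := by
          exact mul_right_cancel₀ (ne_of_gt hspos) h0eq
        ext j
        rcases Fin.eq_zero_or_eq_succ j with rfl | ⟨j₀, rfl⟩
        · exact h00
        · exact congrArg (· j₀) he
    · right
      refine ⟨i.succ, by simp [Fin.val_succ], hie, hia, ?_⟩
      intro j hj
      rcases Fin.eq_zero_or_eq_succ j with rfl | ⟨j₀, rfl⟩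
      · exact absurd hj (by simp [Fin.lt_def])
      · exact hiu j₀ (by rwa [Fin.succ_lt_succ_iff] at hj)

lemma phi_continuous (n : ℕ) : Continuous (phi n) := by
  induction n with
  | zero => exact continuous_id
  | succ n ih =>
    have htl : Continuous (fun x : EuclideanSpace ℝ (Fin (n+1)) =>
        (tl x : EuclideanSpace ℝ (Fin n))) :=
      (PiLp.continuous_toLp 2 _).comp (continuous_pi fun i => PiLp.continuous_apply 2 _ i.succ)
    have hphitl : Continuous (fun x : EuclideanSpace ℝ (Fin (n+1)) => phi n (tl x)) :=
      ih.comp htl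
    have hhead : Continuous (fun x : EuclideanSpace ℝ (Fin (n+1)) =>
        x 0 * Real.sqrt (1 - ‖phi n (tl x)‖ ^ 2)) := by
      apply Continuous.mul (PiLp.continuous_apply 2 _ 0)
      exact Real.continuous_sqrt.comp (by fun_prop)
    refine (PiLp.continuous_toLp 2 _).comp (f := fun x => (phi (n+1) x).ofLp) (continuous_pi fun i => ?_)
    rcases Fin.eq_zero_or_eq_succ i with rfl | ⟨j, rfl⟩
    · simpa [phi_succ] using hhead
    · simpa [phi_succ, Function.comp_def] using (PiLp.continuous_apply 2 _ j).comp hphitl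

lemma cube_compact (n : ℕ) : IsCompact (cube n) := by
  have hclosed : IsClosed (cube n) := by
    have : cube n = ⋂ i, (fun x : EuclideanSpace ℝ (Fin n) => x i) ⁻¹' Set.Icc (-1) 1 := by
      ext x
      simp [cube, abs_le]
    rw [this]
    exact isClosed_iInter fun i => (isClosed_Icc).preimage (PiLp.continuous_apply 2 _ i)
  have hsub : cube n ⊆ Metric.closedBall 0 (Real.sqrt n) := by
    intro x hx
    rw [Metric.mem_closedBall, dist_zero_right]
    rw [show (Real.sqrt n) = Real.sqrt n from rfl]
    rw [← Real.sqrt_sq (norm_nonneg x)]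
    apply Real.sqrt_le_sqrt
    rw [myNormSq]
    calc ∑ i, x i ^ 2 ≤ ∑ _i : Fin n, 1 := by
          apply Finset.sum_le_sum
          intro i _
          nlinarith [hx i, abs_nonneg (x i), sq_abs (x i)]
      _ = n := by simp
  exact (isCompact_closedBall 0 _).of_isClosed_subset hclosed hsub


/-- a singular cube factors through the globe exactly when it is globular.
For a continuous `a : Iⁿ → X` (`n ≥ 1`), there is a continuous `g : Dⁿ → X` with
`a = g ∘ φₙ` iff, for every 0-based index `i ≥ 1` (`2 ≤ i ≤ n` 1-based), `a` takes equal
values at points of `Iⁿ` that agree in the `i`-th coordinate, which is `±1`, and agree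
in all later coordinates. -/
theorem factors_through_globe_iff_globular {X : Type*} [TopologicalSpace X]
    (n : ℕ) (hn : 1 ≤ n)
    (a : EuclideanSpace ℝ (Fin n) → X) (ha : ContinuousOn a (cube n)) :
    (∃ g : EuclideanSpace ℝ (Fin n) → X, ContinuousOn g (disk n) ∧
        ∀ x ∈ cube n, a x = g (phi n x)) ↔
      ∀ i : Fin n, 1 ≤ (i : ℕ) →
        ∀ x ∈ cube n, ∀ x' ∈ cube n,
          x i = x' i → (x i = 1 ∨ x i = -1) →
          (∀ j : Fin n, i < j → x j = x' j) →
          a x = a x' := by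
  constructor
  · rintro ⟨g, hg, hfac⟩ i hi x hx x' hx' hxi hpm hup
    have habs : |x i| = 1 := by rcases hpm with h | h <;> simp [h]
    rw [hfac x hx, hfac x' hx', phi_eq_of_step x hx x' hx' i hi hxi habs hup]
  · intro H
    have hconst : ∀ x ∈ cube n, ∀ x' ∈ cube n, phi n x = phi n x' → a x = a x' := by
      intro x hx x' hx' heq
      rcases fiber_step x hx x' hx' heq with rfl | ⟨i, hi1, hie, hia, hiu⟩
      · rfl
      · exact H i hi1 x hx x' hx' hie ((abs_eq (by norm_num : (0:ℝ) ≤ 1)).mp hia) hiu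
    have hsec : ∀ u, ∃ x, u ∈ disk n → x ∈ cube n ∧ phi n x = u := by
      intro u
      by_cases h : u ∈ disk n
      · obtain ⟨x, hx, hxu⟩ := phi_surj u h; exact ⟨x, fun _ => ⟨hx, hxu⟩⟩
      · exact ⟨0, fun hu => absurd hu h⟩
    choose s hs using hsec
    have key : ∀ x ∈ cube n, a x = (a ∘ s) (phi n x) := by
      intro x hx
      have hd : phi n x ∈ disk n := norm_phi_le x hx
      obtain ⟨hsc, hsphi⟩ := hs (phi n x) hd
      exact hconst x hx (s (phi n x)) hsc hsphi.symm
    refine ⟨a ∘ s, ?_, key⟩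
    haveI : CompactSpace (cube n) := isCompact_iff_compactSpace.mp (cube_compact n)
    set F : cube n → disk n := fun x => ⟨phi n x.1, norm_phi_le _ x.2⟩ with hF
    have hFc : Continuous F :=
      Continuous.subtype_mk ((phi_continuous n).comp continuous_subtype_val) _
    have hFs : Function.Surjective F := by
      rintro ⟨u, hu⟩
      obtain ⟨x, hx, hxu⟩ := phi_surj u hu
      exact ⟨⟨x, hx⟩, Subtype.ext hxu⟩
    have hq : Topology.IsQuotientMap F := (hFc.isClosedMap).isQuotientMap hFc hFs
    rw [continuousOn_iff_continuous_restrict, hq.continuous_iff]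
    have he : ((disk n).restrict (a ∘ s)) ∘ F = (cube n).restrict a := by
      funext x
      exact (key x.1 x.2).symm
    rw [show (disk n).domRestrict (a ∘ s) = (disk n).restrict (a ∘ s) from rfl, he]
    exact continuousOn_iff_continuous_restrict.mp ha
end
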